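/- Let ω be a real number with 0 < ω < 2 and let A, B ∈ ℝⁿˣⁿ with A invertible. If ‖A⁻¹B‖ < ((1 - |1-ω|)/ω)², then ω·√(‖A⁻¹B‖) < 1 - |1-ω|, and the GAVE Ax - B|x| = b has a unique solution for every b ∈ ℝⁿ to which the SOR-like iteration converges. -/

import Mathlib

/-- The operator 2-norm of a real square matrix. -/
noncomputable def l2OpNorm {n : ℕ} (A : Matrix (Fin n) (Fin n) ℝ) : ℝ :=
  ‖(Matrix.toEuclideanCLM (𝕜 := ℝ) A :
      EuclideanSpace ℝ (Fin n) →L[ℝ] EuclideanSpace ℝ (Fin n))‖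

/-- The canonical identification of `Fin n → ℝ` with Euclidean space. -/
noncomputable def toE {n : ℕ} (v : Fin n → ℝ) : EuclideanSpace ℝ (Fin n) :=
  (WithLp.equiv 2 (Fin n → ℝ)).symm v

lemma toE_sub {n : ℕ} (a c : Fin n → ℝ) : toE (a - c) = toE a - toE c := rfl
lemma toE_add {n : ℕ} (a c : Fin n → ℝ) : toE (a + c) = toE a + toE c := rfl
lemma toE_smul {n : ℕ} (r : ℝ) (a : Fin n → ℝ) : toE (r • a) = r • toE a := rfl

lemma aux_mulVec_norm_le {n : ℕ} (M : Matrix (Fin n) (Fin n) ℝ) (v : Fin n → ℝ) :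
    ‖toE (M.mulVec v)‖ ≤ l2OpNorm M * ‖toE v‖ := by
  have h := (Matrix.toEuclideanCLM (𝕜 := ℝ) M).le_opNorm (toE v)
  have he : (Matrix.toEuclideanCLM (𝕜 := ℝ) M) (toE v) = toE (M.mulVec v) := by
    unfold toE
    rfl
  rw [he] at h
  exact h

lemma aux_abs_norm_le {n : ℕ} (a c : Fin n → ℝ) :
    ‖toE ((fun i => |a i|) - fun i => |c i|)‖ ≤ ‖toE (a - c)‖ := by
  rw [EuclideanSpace.norm_eq, EuclideanSpace.norm_eq]
  apply Real.sqrt_le_sqrt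
  apply Finset.sum_le_sum
  intro i _
  have h1 : ‖|a i| - |c i|‖ ≤ ‖a i - c i‖ := by
    rw [Real.norm_eq_abs, Real.norm_eq_abs]
    exact abs_abs_sub_abs_le_abs_sub _ _
  have h2 := pow_le_pow_left₀ (norm_nonneg _) h1 2
  simpa [toE] using h2

set_option maxHeartbeats 1000000 in
theorem stmt_19 (n : ℕ) (A B : Matrix (Fin n) (Fin n) ℝ) (hA : IsUnit A)
    (ω : ℝ) (hω0 : 0 < ω) (hω2 : ω < 2)
    (h : l2OpNorm (A⁻¹ * B) < ((1 - |1 - ω|) / ω) ^ 2) :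
    ω * Real.sqrt (l2OpNorm (A⁻¹ * B)) < 1 - |1 - ω| ∧
      ∀ b : Fin n → ℝ,
        (∃! x : Fin n → ℝ, A.mulVec x - B.mulVec (fun i => |x i|) = b) ∧
        ∀ xs : Fin n → ℝ, A.mulVec xs - B.mulVec (fun i => |xs i|) = b →
          ∀ x y : ℕ → Fin n → ℝ,
            (∀ k, x (k + 1) =
              (1 - ω) • x k + ω • A⁻¹.mulVec (B.mulVec (y k) + b)) →
            (∀ k, y (k + 1) =
              (1 - ω) • y k + ω • fun i => |x (k + 1) i|) →
            Filter.Tendsto x Filter.atTop (nhds xs) := by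
  have hAdet : IsUnit A.det := (Matrix.isUnit_iff_isUnit_det A).mp hA
  have hinvA : A⁻¹ * A = 1 := Matrix.nonsing_inv_mul A hAdet
  have hAinv : A * A⁻¹ = 1 := Matrix.mul_nonsing_inv A hAdet
  set ν := l2OpNorm (A⁻¹ * B) with hνdef
  have hν0 : 0 ≤ ν := norm_nonneg _
  set a := |1 - ω| with hadef
  have ha0 : 0 ≤ a := abs_nonneg _
  have ha1 : a < 1 := by
    rw [hadef, abs_lt]; constructor <;> linarith
  have h1a : 0 < 1 - a := by linarith
  have hsqrt : Real.sqrt ν < (1 - a) / ω := by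
    have h2 := Real.sqrt_lt_sqrt hν0 h
    rwa [Real.sqrt_sq (by positivity)] at h2
  have hsν : 0 ≤ Real.sqrt ν := Real.sqrt_nonneg _
  have hfirst : ω * Real.sqrt ν < 1 - a := by
    have h2 := (lt_div_iff₀ hω0).mp hsqrt
    linarith
  have h1aω : 1 - a ≤ ω := by
    rw [hadef]
    rcases abs_cases (1 - ω) with ⟨he, _⟩ | ⟨he, _⟩ <;> linarith
  have hν1 : ν < 1 := by
    have h2 : Real.sqrt ν < 1 := lt_of_lt_of_le hsqrt (by rw [div_le_one hω0]; exact h1aω)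
    nlinarith [Real.mul_self_sqrt hν0]
  refine ⟨hfirst, fun b => ?_⟩
  -- The contraction map for existence and uniqueness
  set F : EuclideanSpace ℝ (Fin n) → EuclideanSpace ℝ (Fin n) :=
    fun v => toE (A⁻¹.mulVec (B.mulVec (fun i => |v i|) + b)) with hFdef
  have hFlip : ∀ v w : EuclideanSpace ℝ (Fin n), ‖F v - F w‖ ≤ ν * ‖v - w‖ := by
    intro v w
    have e1 : F v - F w
        = toE ((A⁻¹ * B).mulVec ((fun i => |v i|) - fun i => |w i|)) := by
      rw [hFdef]
      dsimp only
      rw [← toE_sub]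
      congr 1
      rw [← Matrix.mulVec_mulVec, Matrix.mulVec_sub, ← Matrix.mulVec_sub]
      congr 1
      abel
    rw [e1]
    calc ‖toE ((A⁻¹ * B).mulVec ((fun i => |v i|) - fun i => |w i|))‖
        ≤ ν * ‖toE ((fun i => |v i|) - fun i => |w i|)‖ := aux_mulVec_norm_le _ _
      _ ≤ ν * ‖toE ((fun i => v i) - fun i => w i)‖ := by
          exact mul_le_mul_of_nonneg_left (aux_abs_norm_le _ _) hν0
      _ = ν * ‖v - w‖ := rfl
  have hFc : ContractingWith ⟨ν, hν0⟩ F := by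
    constructor
    · exact_mod_cast hν1
    · apply LipschitzWith.of_dist_le_mul
      intro v w
      rw [dist_eq_norm, dist_eq_norm]
      exact hFlip v w
  have hfixpt : F (ContractingWith.fixedPoint F hFc) = ContractingWith.fixedPoint F hFc :=
    hFc.fixedPoint_isFixedPt
  set xfix : EuclideanSpace ℝ (Fin n) := ContractingWith.fixedPoint F hFc with hxfixdef
  have hiff : ∀ v : Fin n → ℝ,
      (A.mulVec v - B.mulVec (fun i => |v i|) = b) ↔ F (toE v) = toE v := by
    intro v
    constructor
    · intro hv
      have hv' : A.mulVec v = B.mulVec (fun i => |v i|) + b := by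
        rw [← hv]; abel
      show toE (A⁻¹.mulVec (B.mulVec (fun i => |v i|) + b)) = toE v
      rw [← hv', Matrix.mulVec_mulVec, hinvA, Matrix.one_mulVec]
    · intro hv
      have hv' : A⁻¹.mulVec (B.mulVec (fun i => |v i|) + b) = v := congrArg WithLp.ofLp hv
      have h2 := congrArg A.mulVec hv'
      rw [Matrix.mulVec_mulVec, hAinv, Matrix.one_mulVec] at h2
      rw [← h2]; abel
  constructor
  · refine ⟨xfix, ?_, ?_⟩
    · exact (hiff xfix).mpr hfixpt
    · intro w hw
      exact congrArg WithLp.ofLp (hFc.fixedPoint_unique ((hiff w).mp hw))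
  -- Convergence
  intro xs hxs x y hx hy
  set ys : Fin n → ℝ := fun i => |xs i| with hysdef
  have hxs' : A.mulVec xs = B.mulVec ys + b := by
    rw [← hxs]; abel
  have hxsfix : xs = (1 - ω) • xs + ω • A⁻¹.mulVec (B.mulVec ys + b) := by
    rw [← hxs', Matrix.mulVec_mulVec, hinvA, Matrix.one_mulVec]
    module
  -- error recursions
  have hex : ∀ k, x (k + 1) - xs
      = (1 - ω) • (x k - xs) + ω • ((A⁻¹ * B).mulVec (y k - ys)) := by
    intro k
    rw [hx k]
    nth_rw 1 [hxsfix]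
    simp only [← Matrix.mulVec_mulVec, Matrix.mulVec_sub, Matrix.mulVec_add]
    module
  have hey : ∀ k, y (k + 1) - ys
      = (1 - ω) • (y k - ys) + ω • ((fun i => |x (k + 1) i|) - ys) := by
    intro k
    rw [hy k]
    module
  -- scalar setup
  set t : ℝ := ω * Real.sqrt ν with htdef
  have ht0 : 0 ≤ t := by positivity
  have ht2 : ω * ω * ν = t * t := by
    rw [htdef]
    nlinarith [Real.mul_self_sqrt hν0]
  set t₀ : ℝ := (t + (1 - a)) / 2 with ht₀def
  have ht₀pos : 0 < t₀ := by rw [ht₀def]; linarith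
  have htt₀ : t ≤ t₀ := by rw [ht₀def]; linarith
  have ht₀1a : t₀ < 1 - a := by rw [ht₀def]; linarith
  set r : ℝ := max (a + t * t / t₀) (a * (1 + t₀) + t * t) with hrdef
  have hr0 : 0 ≤ r := le_trans (by positivity) (le_max_left _ _)
  have hdiv : t * t / t₀ ≤ t₀ := by
    rw [div_le_iff₀ ht₀pos]; nlinarith [htt₀, ht0, ht₀pos]
  have hr1 : r < 1 := by
    apply max_lt
    · linarith
    · nlinarith
  -- the weighted error
  set d : ℕ → ℝ := fun k => max (ω * ‖toE (x k - xs)‖) (t₀ * ‖toE (y k - ys)‖) with hddef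
  have hexd : ∀ k, ω * ‖toE (x k - xs)‖ ≤ d k := fun k => le_max_left _ _
  have heyd : ∀ k, t₀ * ‖toE (y k - ys)‖ ≤ d k := fun k => le_max_right _ _
  have hd0 : ∀ k, 0 ≤ d k := fun k =>
    le_trans (by positivity) (le_max_left _ _)
  -- norm estimates
  have hexn : ∀ k, ‖toE (x (k + 1) - xs)‖
      ≤ a * ‖toE (x k - xs)‖ + (ω * ν) * ‖toE (y k - ys)‖ := by
    intro k
    calc ‖toE (x (k + 1) - xs)‖
        = ‖(1 - ω) • toE (x k - xs) + ω • toE ((A⁻¹ * B).mulVec (y k - ys))‖ := by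
          rw [hex k, toE_add, toE_smul, toE_smul]
      _ ≤ ‖(1 - ω) • toE (x k - xs)‖ + ‖ω • toE ((A⁻¹ * B).mulVec (y k - ys))‖ :=
          norm_add_le _ _
      _ = a * ‖toE (x k - xs)‖ + ω * ‖toE ((A⁻¹ * B).mulVec (y k - ys))‖ := by
          rw [norm_smul, norm_smul, Real.norm_eq_abs, Real.norm_eq_abs, ← hadef,
            abs_of_pos hω0]
      _ ≤ a * ‖toE (x k - xs)‖ + ω * (ν * ‖toE (y k - ys)‖) := by
          have := aux_mulVec_norm_le (A⁻¹ * B) (y k - ys)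
          rw [← hνdef] at this
          nlinarith
      _ = a * ‖toE (x k - xs)‖ + (ω * ν) * ‖toE (y k - ys)‖ := by ring
  have heyn : ∀ k, ‖toE (y (k + 1) - ys)‖
      ≤ a * ‖toE (y k - ys)‖ + ω * ‖toE (x (k + 1) - xs)‖ := by
    intro k
    have habs : ‖toE ((fun i => |x (k + 1) i|) - ys)‖ ≤ ‖toE (x (k + 1) - xs)‖ :=
      aux_abs_norm_le (x (k + 1)) xs
    calc ‖toE (y (k + 1) - ys)‖
        = ‖(1 - ω) • toE (y k - ys) + ω • toE ((fun i => |x (k + 1) i|) - ys)‖ := by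
          rw [hey k, toE_add, toE_smul, toE_smul]
      _ ≤ ‖(1 - ω) • toE (y k - ys)‖ + ‖ω • toE ((fun i => |x (k + 1) i|) - ys)‖ :=
          norm_add_le _ _
      _ = a * ‖toE (y k - ys)‖ + ω * ‖toE ((fun i => |x (k + 1) i|) - ys)‖ := by
          rw [norm_smul, norm_smul, Real.norm_eq_abs, Real.norm_eq_abs, ← hadef,
            abs_of_pos hω0]
      _ ≤ a * ‖toE (y k - ys)‖ + ω * ‖toE (x (k + 1) - xs)‖ := by nlinarith
  -- the contraction step
  have hc : t * t / t₀ * t₀ = t * t := div_mul_cancel₀ _ ht₀pos.ne'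
  have hdivnn : 0 ≤ t * t / t₀ := by positivity
  have hstep : ∀ k, d (k + 1) ≤ r * d k := by
    intro k
    have hxk := hexd k
    have hyk := heyd k
    have hA1 : ω * ‖toE (x (k + 1) - xs)‖ ≤ (a + t * t / t₀) * d k := by
      have e0 : ω * (ω * ν) = t * t / t₀ * t₀ := by rw [hc, ← ht2]; ring
      calc ω * ‖toE (x (k + 1) - xs)‖
          ≤ ω * (a * ‖toE (x k - xs)‖ + ω * ν * ‖toE (y k - ys)‖) :=
            mul_le_mul_of_nonneg_left (hexn k) hω0.le
        _ = a * (ω * ‖toE (x k - xs)‖) + (ω * (ω * ν)) * ‖toE (y k - ys)‖ := by ring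
        _ = a * (ω * ‖toE (x k - xs)‖) + (t * t / t₀ * t₀) * ‖toE (y k - ys)‖ := by rw [e0]
        _ = a * (ω * ‖toE (x k - xs)‖) + (t * t / t₀) * (t₀ * ‖toE (y k - ys)‖) := by ring
        _ ≤ a * d k + (t * t / t₀) * d k :=
            add_le_add (mul_le_mul_of_nonneg_left hxk ha0)
              (mul_le_mul_of_nonneg_left hyk hdivnn)
        _ = (a + t * t / t₀) * d k := by ring
    have hA2 : t₀ * ‖toE (y (k + 1) - ys)‖ ≤ (a * (1 + t₀) + t * t) * d k := by
      have e3 : t₀ * (ω * ‖toE (x (k + 1) - xs)‖) ≤ t₀ * ((a + t * t / t₀) * d k) :=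
        mul_le_mul_of_nonneg_left hA1 ht₀pos.le
      have e4 : t₀ * ((a + t * t / t₀) * d k) = (t₀ * a + t * t) * d k := by
        have e5 : t₀ * (a + t * t / t₀) = t₀ * a + t * t := by
          rw [mul_add, mul_comm t₀ (t * t / t₀), hc]
        calc t₀ * ((a + t * t / t₀) * d k) = t₀ * (a + t * t / t₀) * d k := by ring
          _ = (t₀ * a + t * t) * d k := by rw [e5]
      calc t₀ * ‖toE (y (k + 1) - ys)‖
          ≤ t₀ * (a * ‖toE (y k - ys)‖ + ω * ‖toE (x (k + 1) - xs)‖) :=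
            mul_le_mul_of_nonneg_left (heyn k) ht₀pos.le
        _ = a * (t₀ * ‖toE (y k - ys)‖) + t₀ * (ω * ‖toE (x (k + 1) - xs)‖) := by ring
        _ ≤ a * d k + (t₀ * a + t * t) * d k := by
            refine add_le_add (mul_le_mul_of_nonneg_left hyk ha0) ?_
            rw [← e4]; exact e3
        _ = (a * (1 + t₀) + t * t) * d k := by ring
    have hmax1 : (a + t * t / t₀) * d k ≤ r * d k :=
      mul_le_mul_of_nonneg_right (le_max_left _ _) (hd0 k)
    have hmax2 : (a * (1 + t₀) + t * t) * d k ≤ r * d k :=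
      mul_le_mul_of_nonneg_right (le_max_right _ _) (hd0 k)
    exact max_le (le_trans hA1 hmax1) (le_trans hA2 hmax2)
  have hdk : ∀ k, d k ≤ r ^ k * d 0 := by
    intro k
    induction k with
    | zero => simp
    | succ k ih =>
        calc d (k + 1) ≤ r * d k := hstep k
          _ ≤ r * (r ^ k * d 0) := mul_le_mul_of_nonneg_left ih hr0
          _ = r ^ (k + 1) * d 0 := by ring
  have hgeo : Filter.Tendsto (fun k => r ^ k * d 0 / ω) Filter.atTop (nhds 0) := by
    have := (tendsto_pow_atTop_nhds_zero_of_lt_one hr0 hr1).mul_const (d 0)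
    have h2 := this.div_const ω
    simpa using h2
  have hlim : Filter.Tendsto (fun k => ‖toE (x k - xs)‖) Filter.atTop (nhds 0) := by
    apply squeeze_zero (fun k => norm_nonneg _) (fun k => ?_) hgeo
    rw [le_div_iff₀ hω0]
    calc ‖toE (x k - xs)‖ * ω = ω * ‖toE (x k - xs)‖ := by ring
      _ ≤ d k := hexd k
      _ ≤ r ^ k * d 0 := hdk k
  have hE : Filter.Tendsto (fun k => toE (x k)) Filter.atTop (nhds (toE xs)) := by
    rw [tendsto_iff_norm_sub_tendsto_zero]
    have : (fun k => ‖toE (x k) - toE xs‖) = fun k => ‖toE (x k - xs)‖ := by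
      funext k; rw [← toE_sub]
    rw [this]
    exact hlim
  have hcont := (PiLp.continuous_ofLp 2 (fun _ : Fin n => ℝ)).tendsto (toE xs)
  exact hcont.comp hE
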